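/- Let (R, e, *, d, c) be a nontrivial amorphic C-algebra of degree n with sign ε, and let d > 0 be a real number such that d_r/d is a positive integer for every r ∈ R^#. Then, with ν = (n − 1)/d + 1, there exist a nontrivial amorphic homogeneous C-algebra (R', e', *', d', c') with |R'| = ν, with d'_u = d for all u ∈ R'^#, and with sign ε, together with a partition π' of R' with {e'} ∈ π' and a bijection φ : R → π' with φ(e) = {e'} and |φ(r)| = d_r/d for all r, such that c_{r,s}^t = Σ_{u∈φ(r)} Σ_{v∈φ(s)} c'_{u,v}^w for all r, s, t ∈ R and every w ∈ φ(t). That is, (R, e, *, d, c) is a fusion of a homogeneous amorphic C-algebra of dimension ν and common degree d. -/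

import Mathlib

set_option linter.unusedSectionVars false


open Finset

/-- Data of a `C`-algebra: a unit `e`, an involution `inv` (written `*` in the paper),
degrees `d`, and structure constants `c`. -/
structure CAlgebraData (R : Type*) where
  e : R
  inv : R → R
  d : R → ℝ
  c : R → R → R → ℝ

/-- The axioms of a `C`-algebra. -/
def IsCAlgebra {R : Type*} [Fintype R] [DecidableEq R] (A : CAlgebraData R) : Prop :=
  A.inv A.e = A.e ∧
  (∀ r, A.inv (A.inv r) = r) ∧
  (∀ r, 0 < A.d r) ∧
  (∀ s t, A.c A.e s t = if s = t then 1 else 0) ∧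
  (∀ r t, A.c r A.e t = if r = t then 1 else 0) ∧
  (∀ r s t u, ∑ v, A.c r s v * A.c v t u = ∑ v, A.c r v u * A.c s t v) ∧
  (∀ r s t, A.c r s t = A.c (A.inv s) (A.inv r) (A.inv t)) ∧
  (∀ r s, A.c r s A.e = if s = A.inv r then A.d r else 0) ∧
  A.d A.e = 1 ∧
  (∀ r, A.d (A.inv r) = A.d r) ∧
  (∀ r s, ∑ t, A.d t * A.c r s t = A.d r * A.d s)

/-- `π` is a partition of the (finite) type `R` into nonempty classes. -/
def IsPartition {R : Type*} [Fintype R] (π : Finset (Finset R)) : Prop :=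
  (∀ S ∈ π, S.Nonempty) ∧ ∀ r : R, ∃! S, S ∈ π ∧ r ∈ S

/-- A `C`-algebra is amorphic if every partition of `R` containing `{e}` as a class
gives rise to a fusion `C`-algebra. -/
def IsAmorphic {R : Type*} [Fintype R] [DecidableEq R] (A : CAlgebraData R) : Prop :=
  ∀ π : Finset (Finset R), IsPartition π → ({A.e} : Finset R) ∈ π →
    (∀ S ∈ π, S.image A.inv ∈ π) ∧
    ∀ S ∈ π, ∀ T ∈ π, ∀ U ∈ π, ∀ u ∈ U, ∀ v ∈ U,
      ∑ r ∈ S, ∑ s ∈ T, A.c r s u = ∑ r ∈ S, ∑ s ∈ T, A.c r s v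

/-- The degree `n` of a `C`-algebra. -/
noncomputable def CAlgebraData.degree {R : Type*} [Fintype R] (A : CAlgebraData R) : ℝ :=
  ∑ r, A.d r

/-- `ε ∈ {-1, 1}` is the sign of a (nontrivial amorphic) `C`-algebra. -/
def IsSign {R : Type*} [Fintype R] (A : CAlgebraData R) (ε : ℝ) : Prop :=
  (ε = -1 ∨ ε = 1) ∧ 0 < Real.sqrt A.degree + ε ∧
    ∀ r s t, r ≠ A.e → s ≠ A.e → t ≠ A.e → r ≠ s → s ≠ t → r ≠ t →
      A.c r s t = A.d r * A.d s / (Real.sqrt A.degree + ε) ^ 2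


section Hom
variable {X : Type*} [Fintype X] [DecidableEq X]

/-- structure constants of the homogeneous amorphic C-algebra -/
noncomputable def homc (e' : X) (d q ε : ℝ) (u v w : X) : ℝ :=
  if u = e' then (if v = w then 1 else 0)
  else if v = e' then (if u = w then 1 else 0)
  else if w = e' then (if u = v then d else 0)
  else d^2/q^2 + (if u = v then d*ε*q/q^2 else 0) + (if u = w then d*ε*q/q^2 else 0)
    + (if v = w then d*ε*q/q^2 else 0)
    + (if u = v ∧ v = w then (q^2 - ε*q^3)/q^2 else 0)

noncomputable def Ech (e' : X) (d q ε : ℝ) (i u : X) : ℝ :=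
  if u = e' then 1 else if i = e' then d else if i = u then ε*d/q + 1 - ε*q else ε*d/q

variable (e' : X) (d q ε : ℝ)

lemma Ech_e' (i : X) : Ech e' d q ε i e' = 1 := by simp [Ech]

lemma Ech_ne (i u : X) (hu : u ≠ e') (hi : i ≠ e') :
    Ech e' d q ε i u = ε*d/q + (if u = i then 1 - ε*q else 0) := by
  simp only [Ech, if_neg hu, if_neg hi]
  by_cases h : i = u
  · simp [h]; ring
  · rw [if_neg h, if_neg (fun hh => h hh.symm)]; ring

lemma sum_Ech_e : ∑ v ∈ univ.erase e', Ech e' d q ε e' v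
    = ((univ.erase e').card : ℝ) * d := by
  rw [Finset.sum_congr rfl (fun v hv => by
    simp [Ech, Finset.ne_of_mem_erase hv] : ∀ v ∈ univ.erase e', Ech e' d q ε e' v = d)]
  rw [Finset.sum_const, nsmul_eq_mul]

lemma sum_Ech_ne (i : X) (hi : i ≠ e') : ∑ v ∈ univ.erase e', Ech e' d q ε i v
    = ((univ.erase e').card : ℝ) * (ε*d/q) + (1 - ε*q) := by
  rw [Finset.sum_congr rfl (fun v hv => Ech_ne e' d q ε i v (Finset.ne_of_mem_erase hv) hi)]
  rw [Finset.sum_add_distrib, Finset.sum_const, nsmul_eq_mul,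
    Finset.sum_ite_eq' (univ.erase e') i (fun _ => (1:ℝ) - ε*q),
    if_pos (Finset.mem_erase.2 ⟨hi, Finset.mem_univ i⟩)]

end Hom

section Hom2
variable {X : Type*} [Fintype X] [DecidableEq X] (e' : X) (d q ε : ℝ)

lemma Ech_ee (u : X) (hu : u ≠ e') : Ech e' d q ε e' u = d := by simp [Ech, hu]

lemma homc_pt (u s v : X) (hu : u ≠ e') (hs : s ≠ e') (hv : v ≠ e') (Ei : X → ℝ) :
    homc e' d q ε u s v * Ei v
      = (d^2/q^2 + (if u = s then d*ε*q/q^2 else 0)) * Ei v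
        + (if u = v then d*ε*q/q^2 * Ei v else 0) + (if s = v then d*ε*q/q^2 * Ei v else 0)
        + (if u = s then (if s = v then ((q^2 - ε*q^3)/q^2) * Ei v else 0) else 0) := by
  simp only [homc, if_neg hu, if_neg hs, if_neg hv]
  by_cases h1 : u = s <;> by_cases h2 : u = v <;> by_cases h3 : s = v <;>
    simp only [h1, h2, h3, if_pos, if_neg, and_self, if_true, if_false] <;>
    simp_all <;> ring

lemma homc_sum (u s : X) (hu : u ≠ e') (hs : s ≠ e') (Ei : X → ℝ) :
    ∑ v, homc e' d q ε u s v * Ei v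
      = (if u = s then d else 0) * Ei e'
        + (d^2/q^2 + (if u = s then d*ε*q/q^2 else 0)) * (∑ v ∈ univ.erase e', Ei v)
        + d*ε*q/q^2 * Ei u + d*ε*q/q^2 * Ei s
        + (if u = s then ((q^2 - ε*q^3)/q^2) * Ei s else 0) := by
  rw [← Finset.add_sum_erase univ _ (mem_univ e')]
  have he : homc e' d q ε u s e' = (if u = s then d else 0) := by
    simp [homc, hu, hs]
  rw [he]
  rw [Finset.sum_congr rfl (fun v hv => homc_pt e' d q ε u s v hu hs
    (Finset.ne_of_mem_erase hv) Ei)]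
  rw [Finset.sum_add_distrib, Finset.sum_add_distrib, Finset.sum_add_distrib,
    ← Finset.mul_sum,
    Finset.sum_ite_eq (univ.erase e') u (fun v => d*ε*q/q^2 * Ei v),
    Finset.sum_ite_eq (univ.erase e') s (fun v => d*ε*q/q^2 * Ei v),
    if_pos (Finset.mem_erase.2 ⟨hu, Finset.mem_univ u⟩),
    if_pos (Finset.mem_erase.2 ⟨hs, Finset.mem_univ s⟩)]
  have : ∑ v ∈ univ.erase e', (if u = s then (if s = v then ((q^2 - ε*q^3)/q^2) * Ei v else 0) else 0)
      = (if u = s then ((q^2 - ε*q^3)/q^2) * Ei s else 0) := by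
    by_cases h : u = s
    · simp only [if_pos h]
      rw [Finset.sum_ite_eq (univ.erase e') s (fun v => ((q^2 - ε*q^3)/q^2) * Ei v),
        if_pos (Finset.mem_erase.2 ⟨hs, Finset.mem_univ s⟩)]
    · simp [h]
  rw [this]
  ring

end Hom2

section Hom3
variable {X : Type*} [Fintype X] [DecidableEq X] (e' : X) (d q ε : ℝ)

set_option maxHeartbeats 1000000 in
lemma star_hom (hd : d ≠ 0) (hq : q ≠ 0) (hpm : ε = 1 ∨ ε = -1)
    (hM : ((Fintype.card X : ℝ) - 1) * d = q^2 - 2*ε*q) (i u s : X) :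
    Ech e' d q ε i u * Ech e' d q ε i s = ∑ v, homc e' d q ε u s v * Ech e' d q ε i v := by
  by_cases hu : u = e'
  · have hc : ∀ v, homc e' d q ε e' s v = if s = v then 1 else 0 := by
      intro v; simp [homc]
    rw [hu]
    simp only [hc, Ech_e', ite_mul, one_mul, zero_mul, Finset.sum_ite_eq, mem_univ, if_true]
  by_cases hs : s = e'
  · have hc : ∀ v, homc e' d q ε u e' v = if u = v then 1 else 0 := by
      intro v; simp [homc, hu]
    rw [hs]
    simp only [hc, Ech_e', ite_mul, one_mul, zero_mul, Finset.sum_ite_eq, mem_univ, if_true,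
      mul_one]
  rw [homc_sum e' d q ε u s hu hs]
  have hcar : ((univ.erase e').card : ℝ) = (Fintype.card X : ℝ) - 1 := by
    rw [Finset.card_erase_of_mem (Finset.mem_univ e'), Finset.card_univ,
      Nat.cast_sub (Fintype.card_pos_iff.2 ⟨e'⟩), Nat.cast_one]
  have hN : ((Fintype.card X : ℝ)) = (q^2 - 2*ε*q)/d + 1 := by
    field_simp
    linear_combination hM
  have hε2 : ε^2 = 1 := by rcases hpm with h | h <;> rw [h] <;> norm_num
  by_cases hi : i = e'
  · rw [hi, sum_Ech_e, hcar, Ech_e', Ech_ee _ _ _ _ u hu, Ech_ee _ _ _ _ s hs, hN]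
    split_ifs with h1 <;>
      first
        | (field_simp; linear_combination (2*d*q^2) * hε2)
        | (field_simp; linear_combination (2*q^2) * hε2)
        | (field_simp; ring)
        | (exfalso; subst_vars; simp_all)
  · rw [sum_Ech_ne e' d q _ i hi, hcar, Ech_e',
      Ech_ne e' d q _ i u hu hi, Ech_ne e' d q _ i s hs hi, hN]
    rcases hpm with h | h <;> subst h <;>
    · split_ifs with h1 h2 h3 h4 h5 h6 h7 h8 <;>
        first
          | (exfalso; clear hM hN hcar hε2 hd hq; subst_vars; simp_all; done)
          | (field_simp; ring)

end Hom3

section Hom4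
variable {X : Type*} [Fintype X] [DecidableEq X] (e' : X) (d q ε : ℝ)

lemma qEch (hq : q ≠ 0) (i w : X) (hw : w ≠ e') (hi : i ≠ e') :
    q * Ech e' d q ε i w = ε*d + (if w = i then q*(1-ε*q) else 0) := by
  rw [Ech_ne e' d q ε i w hw hi]
  by_cases h : w = i
  · rw [if_pos h, if_pos h]; field_simp
  · rw [if_neg h, if_neg h]; field_simp; ring

lemma ext_hom (hd : d ≠ 0) (hq : q ≠ 0) (hpm : ε = 1 ∨ ε = -1) (hqe : q ≠ ε)
    (hM : ((Fintype.card X : ℝ) - 1) * d = q^2 - 2*ε*q)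
    (a b : X → ℝ) (h : ∀ i, ∑ w, a w * Ech e' d q ε i w = ∑ w, b w * Ech e' d q ε i w)
    (w : X) : a w = b w := by
  have hε2 : ε^2 = 1 := by rcases hpm with h' | h' <;> rw [h'] <;> norm_num
  have hne : 1 - ε*q ≠ 0 := by
    intro h0
    apply hqe
    have h1 : ε*q = 1 := by linarith
    calc q = (ε^2)*q := by rw [hε2]; ring
    _ = ε*(ε*q) := by ring
    _ = ε := by rw [h1]; ring
  have key : ∀ i, ∑ w, (a w - b w) * Ech e' d q ε i w = 0 := by
    intro i
    rw [Finset.sum_congr rfl (fun w _ => sub_mul (a w) (b w) (Ech e' d q ε i w)),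
      Finset.sum_sub_distrib, h i, sub_self]
  set g : X → ℝ := fun w => a w - b w with hg
  obtain ⟨S, hS⟩ : ∃ S : ℝ, S = ∑ w ∈ univ.erase e', g w := ⟨_, rfl⟩
  have split : ∀ i, ∑ w, g w * Ech e' d q ε i w
      = g e' + ∑ w ∈ univ.erase e', g w * Ech e' d q ε i w := by
    intro i
    rw [← Finset.add_sum_erase univ _ (mem_univ e'), Ech_e', mul_one]
  have eqe : g e' + d * S = 0 := by
    have h0 := key e'
    rw [split e'] at h0
    rw [Finset.sum_congr rfl (fun w hw => by
      rw [Ech_ee e' d q ε w (Finset.ne_of_mem_erase hw)] :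
      ∀ w ∈ univ.erase e', g w * Ech e' d q ε e' w = g w * d)] at h0
    rw [← Finset.sum_mul, ← hS] at h0
    linarith [h0]
  have eqi : ∀ i, i ≠ e' → q * g e' + ε*d * S + q*(1-ε*q) * g i = 0 := by
    intro i hi
    have h0 := key i
    rw [split i] at h0
    have h1 : q * (g e' + ∑ w ∈ univ.erase e', g w * Ech e' d q ε i w) = 0 := by
      rw [h0, mul_zero]
    rw [mul_add, Finset.mul_sum] at h1
    rw [Finset.sum_congr rfl (fun w hw => by
      rw [show q * (g w * Ech e' d q ε i w) = g w * (q * Ech e' d q ε i w) by ring,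
        qEch e' d q ε hq i w (Finset.ne_of_mem_erase hw) hi, mul_add, mul_ite, mul_zero] :
      ∀ w ∈ univ.erase e', q * (g w * Ech e' d q ε i w)
        = g w * (ε*d) + (if w = i then g w * (q*(1-ε*q)) else 0))] at h1
    rw [Finset.sum_add_distrib, ← Finset.sum_mul,
      Finset.sum_ite_eq' (univ.erase e') i (fun w => g w * (q*(1-ε*q))),
      if_pos (Finset.mem_erase.2 ⟨hi, Finset.mem_univ i⟩), ← hS] at h1
    linarith [h1]
  have gi : ∀ i, i ≠ e' → q*(1-ε*q) * g i = (d*q - ε*d) * S := by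
    intro i hi
    linear_combination eqi i hi - q * eqe
  have hSsum : q*(1-ε*q) * S = ((Fintype.card X : ℝ) - 1) * ((d*q - ε*d) * S) := by
    have h2 : ∑ w ∈ univ.erase e', (q*(1-ε*q) * g w)
        = ∑ _w ∈ univ.erase e', ((d*q - ε*d) * S) :=
      Finset.sum_congr rfl (fun w hw => gi w (Finset.ne_of_mem_erase hw))
    rw [← Finset.mul_sum, ← hS, Finset.sum_const, nsmul_eq_mul,
      Finset.card_erase_of_mem (Finset.mem_univ e'), Finset.card_univ,
      Nat.cast_sub (Fintype.card_pos_iff.2 ⟨e'⟩), Nat.cast_one] at h2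
    exact h2
  have hS0 : S = 0 := by
    have h6 : q*(1-ε*q)*S = (q^2-2*ε*q)*(q-ε)*S := by
      rw [hSsum]; linear_combination (q-ε)*S*hM
    have h3 : S * (q*(q-ε)^2) = 0 := by linear_combination (-1)*h6 - q*S*hε2
    rcases mul_eq_zero.1 h3 with h4 | h4
    · exact h4
    · exfalso
      rcases mul_eq_zero.1 h4 with h5 | h5
      · exact hq h5
      · exact pow_ne_zero 2 (sub_ne_zero.2 hqe) h5
  have ge' : g e' = 0 := by rw [hS0] at eqe; linarith
  have hgw : g w = 0 := by
    by_cases hw : w = e'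
    · rw [hw]; exact ge'
    · have := gi w hw
      rw [hS0, mul_zero] at this
      rcases mul_eq_zero.1 this with h4 | h4
      · exfalso; exact mul_ne_zero hq hne h4
      · exact h4
  have : a w - b w = 0 := hgw
  linarith

end Hom4

section Hom5
variable {X : Type*} [Fintype X] [DecidableEq X] (e' : X) (d q ε : ℝ)

/-- the homogeneous amorphic C-algebra -/
noncomputable def homA (e' : X) (d q ε : ℝ) : CAlgebraData X :=
  ⟨e', id, fun u => if u = e' then 1 else d, homc e' d q ε⟩

lemma assoc_hom (hd : d ≠ 0) (hq : q ≠ 0) (hpm : ε = 1 ∨ ε = -1) (hqe : q ≠ ε)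
    (hM : ((Fintype.card X : ℝ) - 1) * d = q^2 - 2*ε*q) (u s t w : X) :
    ∑ v, homc e' d q ε u s v * homc e' d q ε v t w
      = ∑ v, homc e' d q ε u v w * homc e' d q ε s t v := by
  have key : ∀ i : X, ∑ w', (∑ v, homc e' d q ε u s v * homc e' d q ε v t w') * Ech e' d q ε i w'
      = ∑ w', (∑ v, homc e' d q ε u v w' * homc e' d q ε s t v) * Ech e' d q ε i w' := by
    intro i
    have lhs : ∑ w', (∑ v, homc e' d q ε u s v * homc e' d q ε v t w') * Ech e' d q ε i w'
        = (Ech e' d q ε i u * Ech e' d q ε i s) * Ech e' d q ε i t := by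
      rw [Finset.sum_congr rfl (fun w' _ =>
        Finset.sum_mul univ (fun v => homc e' d q ε u s v * homc e' d q ε v t w')
          (Ech e' d q ε i w')), Finset.sum_comm]
      rw [Finset.sum_congr rfl (fun v _ => by
        rw [show ∀ f : X → ℝ, ∑ w', homc e' d q ε u s v * homc e' d q ε v t w' * f w'
            = homc e' d q ε u s v * ∑ w', homc e' d q ε v t w' * f w' from
            fun f => by rw [Finset.mul_sum]; exact Finset.sum_congr rfl fun w' _ => by ring,
          ← star_hom e' d q ε hd hq hpm hM i v t] :
        ∀ v ∈ univ, ∑ w', homc e' d q ε u s v * homc e' d q ε v t w' * Ech e' d q ε i w'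
          = homc e' d q ε u s v * (Ech e' d q ε i v * Ech e' d q ε i t))]
      rw [show ∑ v, homc e' d q ε u s v * (Ech e' d q ε i v * Ech e' d q ε i t)
          = (∑ v, homc e' d q ε u s v * Ech e' d q ε i v) * Ech e' d q ε i t from by
        rw [Finset.sum_mul]; exact Finset.sum_congr rfl fun v _ => by ring,
        ← star_hom e' d q ε hd hq hpm hM i u s]
    have rhs : ∑ w', (∑ v, homc e' d q ε u v w' * homc e' d q ε s t v) * Ech e' d q ε i w'
        = Ech e' d q ε i u * (Ech e' d q ε i s * Ech e' d q ε i t) := by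
      rw [Finset.sum_congr rfl (fun w' _ =>
        Finset.sum_mul univ (fun v => homc e' d q ε u v w' * homc e' d q ε s t v)
          (Ech e' d q ε i w')), Finset.sum_comm]
      rw [Finset.sum_congr rfl (fun v _ => by
        rw [show ∑ w', homc e' d q ε u v w' * homc e' d q ε s t v * Ech e' d q ε i w'
            = homc e' d q ε s t v * ∑ w', homc e' d q ε u v w' * Ech e' d q ε i w' from by
            rw [Finset.mul_sum]; exact Finset.sum_congr rfl fun w' _ => by ring,
          ← star_hom e' d q ε hd hq hpm hM i u v] :
        ∀ v ∈ univ, ∑ w', homc e' d q ε u v w' * homc e' d q ε s t v * Ech e' d q ε i w'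
          = homc e' d q ε s t v * (Ech e' d q ε i u * Ech e' d q ε i v))]
      rw [show ∑ v, homc e' d q ε s t v * (Ech e' d q ε i u * Ech e' d q ε i v)
          = Ech e' d q ε i u * (∑ v, homc e' d q ε s t v * Ech e' d q ε i v) from by
        rw [Finset.mul_sum]; exact Finset.sum_congr rfl fun v _ => by ring,
        ← star_hom e' d q ε hd hq hpm hM i s t]
    rw [lhs, rhs]; ring
  exact ext_hom e' d q ε hd hq hpm hqe hM _ _ key w

end Hom5

section Hom6
variable {X : Type*} [Fintype X] [DecidableEq X] (e' : X) (d q ε : ℝ)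

lemma Ech_e_deg (x : X) : Ech e' d q ε e' x = (homA e' d q ε).d x := by
  by_cases hx : x = e'
  · simp [Ech, homA, hx]
  · simp [Ech, homA, hx]

lemma homc_symm (u v w : X) : homc e' d q ε u v w = homc e' d q ε v u w := by
  unfold homc
  by_cases hu : u = e' <;> by_cases hv : v = e'
  · simp [hu, hv]
  · simp only [if_pos hu, if_neg hv, if_pos rfl]
  · simp only [if_pos hv, if_neg hu, if_pos rfl]
  · simp only [if_neg hu, if_neg hv]
    by_cases hw : w = e'
    · simp only [if_pos hw]
      by_cases h : u = v
      · rw [if_pos h, if_pos h.symm]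
      · rw [if_neg h, if_neg (fun hh => h hh.symm)]
    · simp only [if_neg hw]
      by_cases h1 : u = v <;> by_cases h2 : u = w <;> by_cases h3 : v = w <;>
        first
          | (exfalso; clear hM; subst_vars; simp_all; done)
          | (simp only [h1, h2, h3, eq_comm, and_true, and_false, if_true, if_false,
              true_and, false_and] <;> simp_all <;> ring)

lemma homA_isC (hd : 0 < d) (hq : q ≠ 0) (hpm : ε = 1 ∨ ε = -1) (hqe : q ≠ ε)
    (hM : ((Fintype.card X : ℝ) - 1) * d = q^2 - 2*ε*q) :
    IsCAlgebra (homA e' d q ε) := by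
  refine ⟨rfl, fun r => rfl, ?_, ?_, ?_, ?_, ?_, ?_, if_pos rfl, fun r => rfl, ?_⟩
  · intro r
    show (0:ℝ) < if r = e' then 1 else d
    split_ifs <;> [norm_num; exact hd]
  · intro s t
    show homc e' d q ε e' s t = _
    simp [homc]
  · intro r t
    show homc e' d q ε r e' t = _
    by_cases hr : r = e'
    · simp [homc, hr, eq_comm]
    · simp [homc, hr]
  · exact fun r s t u => assoc_hom e' d q ε hd.ne' hq hpm hqe hM r s t u
  · exact fun r s t => homc_symm e' d q ε r s t
  · intro r s
    show homc e' d q ε r s e' = if s = r then (if r = e' then 1 else d) else 0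
    by_cases hr : r = e'
    · rw [hr]; simp [homc]
    · by_cases hs : s = e'
      · rw [hs]
        have h1 : ¬ (e' : X) = r := fun h => hr h.symm
        simp [homc, hr, h1]
      · have h2 : homc e' d q ε r s e' = if r = s then d else 0 := by
          simp [homc, hr, hs]
        rw [h2, if_neg hr]
        by_cases h : r = s
        · rw [if_pos h, if_pos h.symm]
        · rw [if_neg h, if_neg (fun hh => h hh.symm)]

  · intro r s
    have h := star_hom e' d q ε hd.ne' hq hpm hM e' r s
    rw [Ech_e_deg e' d q ε r, Ech_e_deg e' d q ε s] at h
    rw [Finset.sum_congr rfl (fun t _ => by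
      rw [mul_comm, ← Ech_e_deg e' d q ε t]; rfl :
      ∀ t ∈ univ, (homA e' d q ε).d t * (homA e' d q ε).c r s t
        = homc e' d q ε r s t * Ech e' d q ε e' t)]
    exact h.symm

end Hom6

section Hom7
variable {X : Type*} [Fintype X] [DecidableEq X]

lemma dsum_const (S T : Finset X) (x : ℝ) :
    ∑ _r ∈ S, ∑ _s ∈ T, x = (S.card : ℝ) * ((T.card : ℝ) * x) := by
  simp [Finset.sum_const, nsmul_eq_mul, mul_assoc]

lemma dsum_diag (S T : Finset X) (x : ℝ) :
    ∑ r ∈ S, ∑ s ∈ T, (if r = s then x else 0) = ((S ∩ T).card : ℝ) * x := by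
  rw [Finset.sum_congr rfl (fun r _ => Finset.sum_ite_eq T r (fun _ => x))]
  rw [Finset.sum_ite_mem, Finset.sum_const, nsmul_eq_mul]

lemma dsum_left (S T : Finset X) (w : X) (x : ℝ) :
    ∑ r ∈ S, ∑ s ∈ T, (if r = w then x else 0)
      = (if w ∈ S then (T.card : ℝ) * x else 0) := by
  rw [Finset.sum_congr rfl (fun r _ => by
    rw [Finset.sum_const, nsmul_eq_mul, mul_ite, mul_zero] :
    ∀ r ∈ S, ∑ _s ∈ T, (if r = w then x else 0)
      = (if r = w then (T.card : ℝ) * x else 0))]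
  rw [Finset.sum_ite_eq' S w (fun _ => (T.card : ℝ) * x)]

lemma dsum_right (S T : Finset X) (w : X) (x : ℝ) :
    ∑ r ∈ S, ∑ s ∈ T, (if s = w then x else 0)
      = (if w ∈ T then (S.card : ℝ) * x else 0) := by
  rw [Finset.sum_congr rfl (fun r _ => Finset.sum_ite_eq' T w (fun _ => x))]
  rw [Finset.sum_const, nsmul_eq_mul, mul_ite, mul_zero]

lemma dsum_both (S T : Finset X) (w : X) (x : ℝ) :
    ∑ r ∈ S, ∑ s ∈ T, (if r = w then (if s = w then x else 0) else 0)
      = (if w ∈ S then (if w ∈ T then x else 0) else 0) := by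
  rw [Finset.sum_congr rfl (fun r _ => by
    by_cases h : r = w
    · simp only [if_pos h]
      rw [Finset.sum_ite_eq' T w (fun _ => x)]
    · simp only [if_neg h, Finset.sum_const_zero] :
    ∀ r ∈ S, ∑ s ∈ T, (if r = w then (if s = w then x else 0) else 0)
      = (if r = w then (if w ∈ T then x else 0) else 0))]
  rw [Finset.sum_ite_eq' S w (fun _ => if w ∈ T then x else 0)]

variable (e' : X) (d q ε : ℝ)

lemma heval (S T : Finset X) (hS : (e' : X) ∉ S) (hT : e' ∉ T) (w : X) (hw : w ≠ e') :
    ∑ r ∈ S, ∑ s ∈ T, homc e' d q ε r s w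
      = (S.card : ℝ) * ((T.card : ℝ) * (d^2/q^2)) + ((S ∩ T).card : ℝ) * (d*ε*q/q^2)
        + (if w ∈ S then (T.card : ℝ) * (d*ε*q/q^2) else 0)
        + (if w ∈ T then (S.card : ℝ) * (d*ε*q/q^2) else 0)
        + (if w ∈ S then (if w ∈ T then (q^2-ε*q^3)/q^2 else 0) else 0) := by
  have hpt : ∀ r ∈ S, ∀ s ∈ T, homc e' d q ε r s w
      = d^2/q^2 + (if r = s then d*ε*q/q^2 else 0) + (if r = w then d*ε*q/q^2 else 0)
        + (if s = w then d*ε*q/q^2 else 0)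
        + (if r = w then (if s = w then (q^2-ε*q^3)/q^2 else 0) else 0) := by
    intro r hr s hs
    have hr' : r ≠ e' := fun h => hS (h ▸ hr)
    have hs' : s ≠ e' := fun h => hT (h ▸ hs)
    simp only [homc, if_neg hr', if_neg hs', if_neg hw]
    congr 1
    by_cases h1 : r = w <;> by_cases h2 : s = w <;> by_cases h3 : r = s <;>
      simp_all
  rw [Finset.sum_congr rfl (fun r hr => Finset.sum_congr rfl (fun s hs => hpt r hr s hs))]
  simp only [Finset.sum_add_distrib]
  rw [dsum_const, dsum_diag, dsum_left, dsum_right, dsum_both]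

lemma homA_amorphic : IsAmorphic (homA e' d q ε) := by
  intro π hπ hmem
  constructor
  · intro S hS
    have : S.image (homA e' d q ε).inv = S := Finset.image_id
    rw [this]; exact hS
  · intro S hS T hT U hU u hu v hv
    have huniq : ∀ W, W ∈ π → ∀ x, x ∈ W → ∀ W', W' ∈ π → x ∈ W' → W = W' := by
      intro W hW x hx W' hW' hx'
      obtain ⟨Wx, _, hun⟩ := hπ.2 x
      rw [hun W ⟨hW, hx⟩, hun W' ⟨hW', hx'⟩]
    have hsing : ∀ W, W ∈ π → (e' : X) ∈ W → W = {e'} := by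
      intro W hW hW'
      exact huniq W hW e' hW' {e'} hmem (Finset.mem_singleton_self e')
    by_cases hU1 : U = {e'}
    · rw [hU1] at hu hv
      rw [Finset.mem_singleton.1 hu, Finset.mem_singleton.1 hv]
    · have hu' : u ≠ e' := fun h => hU1 (hsing U hU (h ▸ hu))
      have hv' : v ≠ e' := fun h => hU1 (hsing U hU (h ▸ hv))
      have memiff : ∀ W, W ∈ π → (u ∈ W ↔ v ∈ W) := by
        intro W hW
        constructor
        · intro h; rw [huniq W hW u h U hU hu]; exact hv
        · intro h; rw [huniq W hW v h U hU hv]; exact hu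
      by_cases hS1 : S = {e'}
      · rw [hS1, Finset.sum_singleton, Finset.sum_singleton]
        have key : ∀ w : X, ∑ s ∈ T, (homA e' d q ε).c e' s w = if w ∈ T then 1 else 0 := by
          intro w
          rw [Finset.sum_congr rfl (fun s _ => show (homA e' d q ε).c e' s w
            = if s = w then 1 else 0 by simp [homA, homc])]
          exact Finset.sum_ite_eq' T w (fun _ => (1:ℝ))
        rw [key u, key v, if_congr (memiff T hT) rfl rfl]
      · have hSe : e' ∉ S := fun h => hS1 (hsing S hS h)
        by_cases hT1 : T = {e'}
        · rw [hT1]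
          have key : ∀ w : X, ∑ r ∈ S, ∑ s ∈ ({e'} : Finset X), (homA e' d q ε).c r s w
              = if w ∈ S then 1 else 0 := by
            intro w
            rw [Finset.sum_congr rfl (fun r hr => by
              have hre : r ≠ e' := fun h => hSe (h ▸ hr)
              rw [Finset.sum_singleton, show (homA e' d q ε).c r e' w
                = if r = w then 1 else 0 from by simp [homA, homc, hre]] :
              ∀ r ∈ S, ∑ s ∈ ({e'} : Finset X), (homA e' d q ε).c r s w
                = if r = w then 1 else 0)]
            exact Finset.sum_ite_eq' S w (fun _ => (1:ℝ))
          rw [key u, key v, if_congr (memiff S hS) rfl rfl]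
        · have hTe : e' ∉ T := fun h => hT1 (hsing T hT h)
          show ∑ r ∈ S, ∑ s ∈ T, homc e' d q ε r s u = ∑ r ∈ S, ∑ s ∈ T, homc e' d q ε r s v
          rw [heval e' d q ε S T hSe hTe u hu', heval e' d q ε S T hSe hTe v hv',
            if_congr (memiff S hS) rfl rfl, if_congr (memiff T hT) rfl rfl,
            if_congr (memiff S hS) (if_congr (memiff T hT) rfl rfl) rfl]

end Hom7

section Hom8
variable {X : Type*} [Fintype X] [DecidableEq X] (e' : X) (d q ε : ℝ)

lemma sumc_left (T : Finset X) (w : X) :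
    ∑ s ∈ T, homc e' d q ε e' s w = if w ∈ T then 1 else 0 := by
  rw [Finset.sum_congr rfl (fun s _ => show homc e' d q ε e' s w
    = if s = w then 1 else 0 by simp [homc])]
  exact Finset.sum_ite_eq' T w (fun _ => (1:ℝ))

lemma sumc_right (S : Finset X) (hSe : e' ∉ S) (w : X) :
    ∑ r ∈ S, homc e' d q ε r e' w = if w ∈ S then 1 else 0 := by
  rw [Finset.sum_congr rfl (fun r hr => show homc e' d q ε r e' w
    = if r = w then 1 else 0 by
      have hre : r ≠ e' := fun h => hSe (h ▸ hr)
      simp [homc, hre])]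
  exact Finset.sum_ite_eq' S w (fun _ => (1:ℝ))

lemma sumc_unit (S T : Finset X) (hSe : e' ∉ S) (hTe : e' ∉ T) :
    ∑ r ∈ S, ∑ s ∈ T, homc e' d q ε r s e' = ((S ∩ T).card : ℝ) * d := by
  rw [Finset.sum_congr rfl (fun r hr => Finset.sum_congr rfl (fun s hs =>
    show homc e' d q ε r s e' = if r = s then d else 0 by
      have hre : r ≠ e' := fun h => hSe (h ▸ hr)
      have hse : s ≠ e' := fun h => hTe (h ▸ hs)
      simp [homc, hre, hse]))]
  exact dsum_diag S T d

lemma homA_degree (hpm : ε = 1 ∨ ε = -1)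
    (hM : ((Fintype.card X : ℝ) - 1) * d = q^2 - 2*ε*q) :
    (homA e' d q ε).degree = (q - ε)^2 := by
  have hε2 : ε^2 = 1 := by rcases hpm with h' | h' <;> rw [h'] <;> norm_num
  show ∑ u : X, (if u = e' then 1 else d) = (q - ε)^2
  rw [← Finset.add_sum_erase univ _ (mem_univ e'), if_pos rfl,
    Finset.sum_congr rfl (fun u hu => if_neg (Finset.ne_of_mem_erase hu)),
    Finset.sum_const, nsmul_eq_mul, Finset.card_erase_of_mem (Finset.mem_univ e'),
    Finset.card_univ, Nat.cast_sub (Fintype.card_pos_iff.2 ⟨e'⟩), Nat.cast_one]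
  linear_combination hM - hε2

end Hom8

section Aside
variable {R : Type*} [Fintype R] [DecidableEq R] (A : CAlgebraData R)

lemma part3 (t : R) (ht : t ≠ A.e) (hcard : 4 ≤ Fintype.card R) :
    IsPartition ({{A.e}, {t}, univ \ {A.e, t}} : Finset (Finset R)) := by
  have hc2 : ({A.e, t} : Finset R).card ≤ 2 :=
    Finset.card_insert_le _ _ |>.trans (by simp)
  have hcs : 2 ≤ (univ \ ({A.e, t} : Finset R)).card := by
    rw [Finset.card_sdiff_of_subset (Finset.subset_univ _), Finset.card_univ]
    omega
  constructor
  · intro S hS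
    simp only [Finset.mem_insert, Finset.mem_singleton] at hS
    rcases hS with h | h | h
    · rw [h]; exact Finset.singleton_nonempty _
    · rw [h]; exact Finset.singleton_nonempty _
    · rw [h, ← Finset.card_pos]; omega
  · intro r
    by_cases h1 : r = A.e
    · refine ⟨{A.e}, ⟨by simp, by simp [h1]⟩, ?_⟩
      rintro S ⟨hS, hrS⟩
      simp only [Finset.mem_insert, Finset.mem_singleton] at hS
      rcases hS with h | h | h
      · exact h
      · exfalso; rw [h, Finset.mem_singleton] at hrS
        exact ht (hrS ▸ h1 ▸ rfl : t = A.e)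
      · exfalso; rw [h, Finset.mem_sdiff] at hrS
        exact hrS.2 (by simp [h1])
    · by_cases h2 : r = t
      · refine ⟨{t}, ⟨by simp, by simp [h2]⟩, ?_⟩
        rintro S ⟨hS, hrS⟩
        simp only [Finset.mem_insert, Finset.mem_singleton] at hS
        rcases hS with h | h | h
        · exfalso; rw [h, Finset.mem_singleton] at hrS; exact h1 hrS
        · exact h
        · exfalso; rw [h, Finset.mem_sdiff] at hrS
          exact hrS.2 (by simp [h2])
      · refine ⟨univ \ {A.e, t}, ⟨by simp, by simp [h1, h2]⟩, ?_⟩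
        rintro S ⟨hS, hrS⟩
        simp only [Finset.mem_insert, Finset.mem_singleton] at hS
        rcases hS with h | h | h
        · exfalso; rw [h, Finset.mem_singleton] at hrS; exact h1 hrS
        · exfalso; rw [h, Finset.mem_singleton] at hrS; exact h2 hrS
        · exact h

lemma A_symm (hA : IsCAlgebra A) (hnt : 4 ≤ Fintype.card R) (ham : IsAmorphic A) :
    ∀ r, A.inv r = r := by
  intro r
  by_cases hr : r = A.e
  · rw [hr]; exact hA.1
  · obtain ⟨hinv, _⟩ := ham _ (part3 A r hr hnt) (Finset.mem_insert_self _ _)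
    have h1 := hinv {r} (by simp)
    rw [Finset.image_singleton] at h1
    simp only [Finset.mem_insert, Finset.mem_singleton] at h1
    rcases h1 with h | h | h
    · exfalso
      have h2 : A.inv r = A.e := Finset.singleton_injective h
      have h3 : r = A.inv (A.inv r) := (hA.2.1 r).symm
      rw [h2, hA.1] at h3
      exact hr h3
    · exact Finset.singleton_injective h
    · exfalso
      have h2 : ({A.inv r} : Finset R).card = (univ \ ({A.e, r} : Finset R)).card := by rw [h]
      have hc2 : ({A.e, r} : Finset R).card ≤ 2 :=
        Finset.card_insert_le _ _ |>.trans (by simp)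
      rw [Finset.card_singleton, Finset.card_sdiff_of_subset (Finset.subset_univ _),
        Finset.card_univ] at h2
      omega

lemma A_comm (hA : IsCAlgebra A) (hsym : ∀ r, A.inv r = r) (r s t : R) :
    A.c r s t = A.c s r t := by
  rw [hA.2.2.2.2.2.2.1 r s t, hsym, hsym, hsym]

lemma A_exch (hA : IsCAlgebra A) (hsym : ∀ r, A.inv r = r) (r s t : R) :
    A.d t * A.c r s t = A.d r * A.c s t r := by
  have h := hA.2.2.2.2.2.1 r s t A.e
  have hL : ∀ v : R, A.c r s v * A.c v t A.e = if t = v then A.c r s v * A.d v else 0 := by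
    intro v
    rw [hA.2.2.2.2.2.2.2.1 v t, hsym, mul_ite, mul_zero]
  have hR : ∀ v : R, A.c r v A.e * A.c s t v = if v = r then A.d r * A.c s t v else 0 := by
    intro v
    rw [hA.2.2.2.2.2.2.2.1 r v, hsym, ite_mul, zero_mul]
  rw [Finset.sum_congr rfl (fun v _ => hL v), Finset.sum_congr rfl (fun v _ => hR v),
    Finset.sum_ite_eq univ t (fun v => A.c r s v * A.d v),
    Finset.sum_ite_eq' univ r (fun v => A.d r * A.c s t v),
    if_pos (Finset.mem_univ t), if_pos (Finset.mem_univ r)] at h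
  linear_combination h

end Aside

section Aside2
variable {R : Type*} [Fintype R] [DecidableEq R] (A : CAlgebraData R) (q ε : ℝ)

lemma A_step1 (hA : IsCAlgebra A) (hnt : 4 ≤ Fintype.card R) (ham : IsAmorphic A)
    (hq : q ≠ 0)
    (hsign : ∀ r s t, r ≠ A.e → s ≠ A.e → t ≠ A.e → r ≠ s → s ≠ t → r ≠ t →
      q^2 * A.c r s t = A.d r * A.d s)
    (t u u' : R) (ht : t ≠ A.e) (hu : u ≠ A.e) (hu' : u' ≠ A.e) (hut : u ≠ t)
    (hu't : u' ≠ t) :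
    q^2 * A.c t u u - A.d t * A.d u = q^2 * A.c t u' u' - A.d t * A.d u' := by
  by_cases huu : u = u'
  · rw [huu]
  obtain ⟨_, hii⟩ := ham _ (part3 A t ht hnt) (Finset.mem_insert_self _ _)
  have hmemT : ∀ w : R, w ≠ A.e → w ≠ t → w ∈ univ \ ({A.e, t} : Finset R) :=
    fun w h1 h2 => Finset.mem_sdiff.2 ⟨Finset.mem_univ w, by simp [h1, h2]⟩
  have hsum := hii {t} (by simp) (univ \ ({A.e, t} : Finset R)) (by simp)
    (univ \ ({A.e, t} : Finset R)) (by simp) u (hmemT u hu hut) u' (hmemT u' hu' hu't)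
  rw [Finset.sum_singleton, Finset.sum_singleton] at hsum
  have hu'T : u' ∈ (univ \ ({A.e, t} : Finset R)).erase u :=
    Finset.mem_erase.2 ⟨fun h => huu h.symm, hmemT u' hu' hu't⟩
  have split : ∀ w : R, ∑ s ∈ univ \ ({A.e, t} : Finset R), A.c t s w
      = A.c t u w + (A.c t u' w
        + ∑ s ∈ ((univ \ ({A.e, t} : Finset R)).erase u).erase u', A.c t s w) := by
    intro w
    rw [← Finset.add_sum_erase _ _ (hmemT u hu hut), ← Finset.add_sum_erase _ _ hu'T]
  rw [split u, split u'] at hsum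
  have htail : ∀ s ∈ ((univ \ ({A.e, t} : Finset R)).erase u).erase u',
      A.c t s u = A.c t s u' := by
    intro s hs
    have hs1 : s ≠ u' := (Finset.mem_erase.1 hs).1
    have hs2 : s ≠ u := (Finset.mem_erase.1 (Finset.mem_erase.1 hs).2).1
    have hs3 := (Finset.mem_sdiff.1 (Finset.mem_erase.1 (Finset.mem_erase.1 hs).2).2).2
    simp only [Finset.mem_insert, Finset.mem_singleton, not_or] at hs3
    obtain ⟨hs4, hs5⟩ := hs3
    have e1 := hsign t s u ht hs4 hu (fun h => hs5 h.symm) hs2 (fun h => hut h.symm)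
    have e2 := hsign t s u' ht hs4 hu' (fun h => hs5 h.symm) hs1 (fun h => hu't h.symm)
    exact mul_left_cancel₀ (pow_ne_zero 2 hq) (e1.trans e2.symm)
  rw [Finset.sum_congr rfl htail] at hsum
  have e3 := hsign t u' u ht hu' hu (fun h => hu't h.symm) (fun h => huu h.symm)
    (fun h => hut h.symm)
  have e4 := hsign t u u' ht hu hu' (fun h => hut h.symm) huu (fun h => hu't h.symm)
  linear_combination q^2 * hsum - e3 + e4

end Aside2

section Aside3
variable {R : Type*} [Fintype R] [DecidableEq R] (A : CAlgebraData R) (q ε : ℝ)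

lemma A_dsum1 (hA : IsCAlgebra A) (t : R) (ht : t ≠ A.e) :
    ∑ v ∈ (univ.erase A.e).erase t, A.d v = A.degree - 1 - A.d t := by
  have h1 : A.degree = ∑ v, A.d v := rfl
  rw [← Finset.add_sum_erase univ _ (Finset.mem_univ A.e),
    ← Finset.add_sum_erase _ _ (Finset.mem_erase.2 ⟨ht, Finset.mem_univ t⟩),
    hA.2.2.2.2.2.2.2.2.1] at h1
  linarith

lemma A_dsum2 (hA : IsCAlgebra A) (t u : R) (ht : t ≠ A.e) (hu : u ≠ A.e) (htu : t ≠ u) :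
    ∑ v ∈ ((univ.erase A.e).erase t).erase u, A.d v = A.degree - 1 - A.d t - A.d u := by
  have h1 := A_dsum1 A hA t ht
  rw [← Finset.add_sum_erase _ _ (Finset.mem_erase.2 ⟨fun h => htu h.symm,
    Finset.mem_erase.2 ⟨hu, Finset.mem_univ u⟩⟩)] at h1
  linarith

lemma A_C4pair (hA : IsCAlgebra A) (hsym : ∀ r, A.inv r = r) (hq : q ≠ 0)
    (hsign : ∀ r s t, r ≠ A.e → s ≠ A.e → t ≠ A.e → r ≠ s → s ≠ t → r ≠ t →
      q^2 * A.c r s t = A.d r * A.d s)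
    (t u : R) (ht : t ≠ A.e) (hu : u ≠ A.e) (htu : t ≠ u) :
    q^2 * (A.d t * A.c t u t) + q^2 * (A.d u * A.c t u u)
      + (A.degree - 1 - A.d t - A.d u) * (A.d t * A.d u) = q^2 * (A.d t * A.d u) := by
  have h := hA.2.2.2.2.2.2.2.2.2.2 t u
  rw [← Finset.add_sum_erase univ _ (Finset.mem_univ A.e),
    ← Finset.add_sum_erase _ _ (Finset.mem_erase.2 ⟨ht, Finset.mem_univ t⟩),
    ← Finset.add_sum_erase _ _ (Finset.mem_erase.2 ⟨fun h' => htu h'.symm,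
      Finset.mem_erase.2 ⟨hu, Finset.mem_univ u⟩⟩)] at h
  have hce : A.c t u A.e = 0 := by
    rw [hA.2.2.2.2.2.2.2.1 t u, hsym, if_neg (fun h' => htu h'.symm)]
  rw [hce, mul_zero] at h
  have htail : q^2 * ∑ v ∈ ((univ.erase A.e).erase t).erase u, A.d v * A.c t u v
      = (A.degree - 1 - A.d t - A.d u) * (A.d t * A.d u) := by
    rw [Finset.mul_sum, Finset.sum_congr rfl (fun v hv => by
      have hv1 : v ≠ u := (Finset.mem_erase.1 hv).1
      have hv2 : v ≠ t := (Finset.mem_erase.1 (Finset.mem_erase.1 hv).2).1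
      have hv3 : v ≠ A.e :=
        Finset.ne_of_mem_erase (Finset.mem_erase.1 (Finset.mem_erase.1 hv).2).2
      rw [show q^2 * (A.d v * A.c t u v) = A.d v * (q^2 * A.c t u v) by ring,
        hsign t u v ht hu hv3 htu (fun h' => hv1 h'.symm) (fun h' => hv2 h'.symm)] :
      ∀ v ∈ ((univ.erase A.e).erase t).erase u,
        q^2 * (A.d v * A.c t u v) = A.d v * (A.d t * A.d u)),
      ← Finset.sum_mul, A_dsum2 A hA t u ht hu htu]
  linear_combination q^2 * h - htail

end Aside3

section Aside4
variable {R : Type*} [Fintype R] [DecidableEq R] (A : CAlgebraData R) (q ε : ℝ)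

lemma A_mixed (hA : IsCAlgebra A) (hnt : 4 ≤ Fintype.card R) (ham : IsAmorphic A)
    (hsym : ∀ r, A.inv r = r) (hq : q ≠ 0)
    (hsign : ∀ r s t, r ≠ A.e → s ≠ A.e → t ≠ A.e → r ≠ s → s ≠ t → r ≠ t →
      q^2 * A.c r s t = A.d r * A.d s)
    (hD : A.degree - 1 = q^2 - 2*ε*q)
    (hdpos : ∀ r, 0 < A.d r)
    (t u : R) (ht : t ≠ A.e) (hu : u ≠ A.e) (htu : t ≠ u) :
    q^2 * A.c t u u = A.d t * A.d u + ε*q*A.d t := by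
  obtain ⟨w, hw⟩ : ∃ w : R, w ∉ ({A.e, t, u} : Finset R) := by
    have h1 : ({A.e, t, u} : Finset R).card ≤ 3 :=
      (Finset.card_insert_le _ _).trans (by
        have := (Finset.card_insert_le t ({u} : Finset R)); simp at this ⊢; omega)
    have h2 : (univ \ ({A.e, t, u} : Finset R)).Nonempty := by
      rw [← Finset.card_pos, Finset.card_sdiff_of_subset (Finset.subset_univ _), Finset.card_univ]
      omega
    obtain ⟨w, hw⟩ := h2
    exact ⟨w, (Finset.mem_sdiff.1 hw).2⟩
  simp only [Finset.mem_insert, Finset.mem_singleton, not_or] at hw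
  obtain ⟨hwe, hwt, hwu⟩ := hw
  have hut : u ≠ t := fun h => htu h.symm
  have h1 := A_step1 A q hA hnt ham hq hsign t u w ht hu hwe hut hwt
  have h2 := A_step1 A q hA hnt ham hq hsign u t w hu ht hwe htu hwu
  have h3 := A_step1 A q hA hnt ham hq hsign w t u hwe ht hu (fun h => hwt h.symm)
    (fun h => hwu h.symm)
  have h4 := A_C4pair A q hA hsym hq hsign t u ht hu htu
  have h5 := A_C4pair A q hA hsym hq hsign t w ht hwe (fun h => hwt h.symm)
  have h6 := A_C4pair A q hA hsym hq hsign u w hu hwe (fun h => hwu h.symm)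
  rw [hD] at h4 h5 h6
  have hc4 : A.c t u t = A.c u t t := A_comm A hA hsym t u t
  have hc5 : A.c t w t = A.c w t t := A_comm A hA hsym t w t
  have hc6 : A.c u w u = A.c w u u := A_comm A hA hsym u w u
  rw [hc4] at h4
  rw [hc5] at h5
  rw [hc6] at h6
  have hdu : A.d u ≠ 0 := (hdpos u).ne'
  have hdw : A.d w ≠ 0 := (hdpos w).ne'
  have key : (2 * A.d u * A.d w) * (q^2 * A.c t u u)
      = (2 * A.d u * A.d w) * (A.d t * A.d u + ε*q*A.d t) := by
    linear_combination A.d w * h4 + A.d u * h5 - A.d t * h6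
      - A.d t * A.d w * h2 - A.d t * A.d u * h3 + A.d u * A.d w * h1
  have h2' : (2 : ℝ) * A.d u * A.d w ≠ 0 := by positivity
  exact mul_left_cancel₀ h2' key

lemma A_diag (hA : IsCAlgebra A) (hnt : 4 ≤ Fintype.card R) (ham : IsAmorphic A)
    (hsym : ∀ r, A.inv r = r) (hq : q ≠ 0)
    (hsign : ∀ r s t, r ≠ A.e → s ≠ A.e → t ≠ A.e → r ≠ s → s ≠ t → r ≠ t →
      q^2 * A.c r s t = A.d r * A.d s)
    (hD : A.degree - 1 = q^2 - 2*ε*q)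
    (hdpos : ∀ r, 0 < A.d r)
    (t u : R) (ht : t ≠ A.e) (hu : u ≠ A.e) (htu : t ≠ u) :
    q^2 * A.c t t u = A.d t * A.d t + ε*q*A.d t := by
  have h1 : A.d u * A.c t t u = A.d t * A.c t u t := A_exch A hA hsym t t u
  have h2 : A.c t u t = A.c u t t := A_comm A hA hsym t u t
  have h3 := A_mixed A q ε hA hnt ham hsym hq hsign hD hdpos u t hu ht (fun h => htu h.symm)
  have hdu : A.d u ≠ 0 := (hdpos u).ne'
  apply mul_left_cancel₀ hdu
  rw [show A.d u * (q^2 * A.c t t u) = q^2 * (A.d u * A.c t t u) by ring, h1, h2]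
  linear_combination A.d t * h3
end Aside4

section Aside5
variable {R : Type*} [Fintype R] [DecidableEq R] (A : CAlgebraData R) (q ε : ℝ)

lemma A_triple (hA : IsCAlgebra A) (hnt : 4 ≤ Fintype.card R) (ham : IsAmorphic A)
    (hsym : ∀ r, A.inv r = r) (hq : q ≠ 0)
    (hsign : ∀ r s t, r ≠ A.e → s ≠ A.e → t ≠ A.e → r ≠ s → s ≠ t → r ≠ t →
      q^2 * A.c r s t = A.d r * A.d s)
    (hD : A.degree - 1 = q^2 - 2*ε*q) (hε2 : ε^2 = 1)
    (hdpos : ∀ r, 0 < A.d r)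
    (t : R) (ht : t ≠ A.e) :
    q^2 * A.c t t t = A.d t * A.d t + 3*ε*q*A.d t + q^2 - ε*q^3 := by
  have h := hA.2.2.2.2.2.2.2.2.2.2 t t
  rw [← Finset.add_sum_erase univ _ (Finset.mem_univ A.e),
    ← Finset.add_sum_erase _ _ (Finset.mem_erase.2 ⟨ht, Finset.mem_univ t⟩)] at h
  have hce : A.c t t A.e = A.d t := by
    rw [hA.2.2.2.2.2.2.2.1 t t, hsym, if_pos rfl]
  rw [hce, hA.2.2.2.2.2.2.2.2.1, one_mul] at h
  have htail : q^2 * ∑ v ∈ (univ.erase A.e).erase t, A.d v * A.c t t v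
      = (A.degree - 1 - A.d t) * (A.d t * A.d t + ε*q*A.d t) := by
    rw [Finset.mul_sum, Finset.sum_congr rfl (fun v hv => by
      have hv1 : v ≠ t := (Finset.mem_erase.1 hv).1
      have hv2 : v ≠ A.e := Finset.ne_of_mem_erase (Finset.mem_erase.1 hv).2
      rw [show q^2 * (A.d v * A.c t t v) = A.d v * (q^2 * A.c t t v) by ring,
        A_diag A q ε hA hnt ham hsym hq hsign hD hdpos t v ht hv2
          (fun h' => hv1 h'.symm)] :
      ∀ v ∈ (univ.erase A.e).erase t,
        q^2 * (A.d v * A.c t t v) = A.d v * (A.d t * A.d t + ε*q*A.d t)),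
      ← Finset.sum_mul, A_dsum1 A hA t ht]
  rw [hD] at htail
  have hdt : A.d t ≠ 0 := (hdpos t).ne'
  apply mul_left_cancel₀ hdt
  linear_combination q^2 * h - htail + (2*q^2*A.d t) * hε2
end Aside5
theorem stmt_11 {R : Type*} [Fintype R] [DecidableEq R] (A : CAlgebraData R)
    (hA : IsCAlgebra A) (hnt : 4 ≤ Fintype.card R) (ham : IsAmorphic A)
    (ε : ℝ) (hε : IsSign A ε)
    (d : ℝ) (hd : 0 < d) (hdiv : ∀ r, r ≠ A.e → ∃ k : ℕ, 0 < k ∧ A.d r = k * d) :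
    ∃ (R' : Type) (fR' : Fintype R') (dR' : DecidableEq R') (A' : CAlgebraData R')
      (π' : Finset (Finset R')) (φ : R → Finset R'),
      @IsCAlgebra R' fR' dR' A' ∧
      4 ≤ @Fintype.card R' fR' ∧
      @IsAmorphic R' fR' dR' A' ∧
      (@Fintype.card R' fR' : ℝ) = (A.degree - 1) / d + 1 ∧
      (∀ u, u ≠ A'.e → A'.d u = d) ∧
      @IsSign R' fR' A' ε ∧
      @IsPartition R' fR' π' ∧ ({A'.e} : Finset R') ∈ π' ∧
      (∀ r, φ r ∈ π') ∧ Function.Injective φ ∧ (∀ S ∈ π', ∃ r, φ r = S) ∧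
      φ A.e = {A'.e} ∧
      (∀ r, r ≠ A.e → ((φ r).card : ℝ) = A.d r / d) ∧
      (∀ r s t, ∀ w ∈ φ t, A.c r s t = ∑ u ∈ φ r, ∑ v ∈ φ s, A'.c u v w) := by
  classical
  obtain ⟨hpm0, hqpos, hsgn⟩ := hε
  have hpm : ε = 1 ∨ ε = -1 := hpm0.symm
  have hε2 : ε^2 = 1 := by rcases hpm with h | h <;> rw [h] <;> norm_num
  have hApos : ∀ r, 0 < A.d r := hA.2.2.1
  have hdegpos : 0 < A.degree :=
    Finset.sum_pos (fun r _ => hApos r) ⟨A.e, Finset.mem_univ _⟩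
  obtain ⟨q, hqdef⟩ : ∃ q : ℝ, q = Real.sqrt A.degree + ε := ⟨_, rfl⟩
  have hq0 : 0 < q := hqdef ▸ hqpos
  have hqgt : ε < q := by
    have : 0 < Real.sqrt A.degree := Real.sqrt_pos.2 hdegpos
    rw [hqdef]; linarith
  have hqne : q ≠ ε := ne_of_gt hqgt
  have hD : A.degree - 1 = q^2 - 2*ε*q := by
    have h1 : Real.sqrt A.degree ^ 2 = A.degree := Real.sq_sqrt hdegpos.le
    have h2 : Real.sqrt A.degree = q - ε := by rw [hqdef]; ring
    rw [h2] at h1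
    linear_combination -h1 + hε2
  have hsign : ∀ r s t, r ≠ A.e → s ≠ A.e → t ≠ A.e → r ≠ s → s ≠ t → r ≠ t →
      q^2 * A.c r s t = A.d r * A.d s := by
    intro r s t h1 h2 h3 h4 h5 h6
    rw [hsgn r s t h1 h2 h3 h4 h5 h6, ← hqdef]
    field_simp
  have hsym : ∀ r, A.inv r = r := A_symm A hA hnt ham
  -- the multiplicities
  obtain ⟨k', hk'pos, hk'e, hk'val⟩ : ∃ k' : R → ℕ, (∀ r, 0 < k' r) ∧ k' A.e = 1 ∧
      (∀ r, r ≠ A.e → (k' r : ℝ) * d = A.d r) := by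
    choose! k hkpos hkval using hdiv
    refine ⟨fun r => if r = A.e then 1 else k r, fun r => ?_, by simp, fun r hr => ?_⟩
    · by_cases h : r = A.e
      · simp [h]
      · simp only [if_neg h]; exact hkpos r h
    · simp only [if_neg hr]; linarith [hkval r hr]
  -- the refined set
  obtain ⟨N, hN⟩ : ∃ N : ℕ, N = Fintype.card (Σ a : R, Fin (k' a)) := ⟨_, rfl⟩
  obtain ⟨Eqv⟩ : Nonempty ((Σ a : R, Fin (k' a)) ≃ Fin N) := ⟨hN ▸ Fintype.equivFin _⟩
  obtain ⟨p, hp⟩ : ∃ p : Fin N → R, p = fun x => (Eqv.symm x).1 := ⟨_, rfl⟩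
  obtain ⟨φ, hφ⟩ : ∃ φ : R → Finset (Fin N), φ = fun r => univ.filter (fun x => p x = r) :=
    ⟨_, rfl⟩
  obtain ⟨e', he'⟩ : ∃ e' : Fin N, e' = Eqv ⟨A.e, ⟨0, hk'pos A.e⟩⟩ := ⟨_, rfl⟩
  have hpe' : p e' = A.e := by rw [hp, he']; simp
  have hmemφ : ∀ x r, x ∈ φ r ↔ p x = r := by
    intro x r; rw [hφ]; simp
  have hcardφ : ∀ r, (φ r).card = k' r := by
    intro r
    have himg : φ r = (univ.filter (fun y : Σ a : R, Fin (k' a) => y.1 = r)).image Eqv := by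
      ext x
      rw [hmemφ, Finset.mem_image]
      constructor
      · intro hx
        refine ⟨Eqv.symm x, Finset.mem_filter.2 ⟨Finset.mem_univ _, ?_⟩,
          Eqv.apply_symm_apply x⟩
        rw [hp] at hx; exact hx
      · rintro ⟨y, hy, rfl⟩
        rw [hp]; simpa using (Finset.mem_filter.1 hy).2
    rw [himg, Finset.card_image_of_injective _ Eqv.injective]
    have : (Finset.univ.filter (fun y : Σ a : R, Fin (k' a) => y.1 = r))
        = ({r} : Finset R).sigma (fun a => (Finset.univ : Finset (Fin (k' a)))) := by
      ext ⟨a, b⟩; simp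
    rw [this, Finset.card_sigma]; simp
  have hNsum : N = ∑ r : R, k' r := by
    rw [hN, Fintype.card_sigma]; simp
  have hN4 : 4 ≤ N := by
    rw [hNsum]
    calc 4 ≤ Fintype.card R := hnt
    _ = ∑ _r : R, 1 := by simp [Finset.card_univ]
    _ ≤ ∑ r : R, k' r := Finset.sum_le_sum (fun r _ => hk'pos r)
  have hdsum : ∑ r ∈ univ.erase A.e, A.d r = A.degree - 1 := by
    have h1 : A.degree = ∑ v, A.d v := rfl
    rw [← Finset.add_sum_erase univ _ (Finset.mem_univ A.e), hA.2.2.2.2.2.2.2.2.1] at h1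
    linarith
  have hMn : ((N : ℝ) - 1) * d = q^2 - 2*ε*q := by
    have h1 : ((N : ℝ) - 1) = ∑ r ∈ univ.erase A.e, (k' r : ℝ) := by
      rw [hNsum, ← Finset.add_sum_erase univ _ (Finset.mem_univ A.e), hk'e]
      push_cast
      ring
    rw [h1, Finset.sum_mul, Finset.sum_congr rfl
      (fun r hr => hk'val r (Finset.ne_of_mem_erase hr)), hdsum]
    exact hD
  have hMn' : ((Fintype.card (Fin N) : ℝ) - 1) * d = q^2 - 2*ε*q := by
    rw [Fintype.card_fin]; exact hMn
  have hφe : φ A.e = {e'} := by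
    have hcard1 : (φ A.e).card = 1 := by rw [hcardφ, hk'e]
    have hmem1 : e' ∈ φ A.e := (hmemφ e' A.e).2 hpe'
    rw [Finset.eq_singleton_iff_unique_mem]
    exact ⟨hmem1, fun y hy => Finset.card_le_one.1 hcard1.le y hy e' hmem1⟩
  have hφne : ∀ r, (φ r).Nonempty := by
    intro r
    rw [← Finset.card_pos, hcardφ]
    exact hk'pos r
  have he'φ : ∀ r, r ≠ A.e → e' ∉ φ r := by
    intro r hr h
    exact hr (hpe'.symm.trans ((hmemφ e' r).1 h)).symm
  refine ⟨Fin N, inferInstance, inferInstance, homA e' d q ε, Finset.image φ univ, φ,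
    homA_isC e' d q ε hd hq0.ne' hpm hqne hMn',
    by rw [Fintype.card_fin]; exact hN4,
    homA_amorphic e' d q ε,
    ?_, ?_, ?_, ?_, ?_,
    fun r => Finset.mem_image_of_mem φ (Finset.mem_univ r), ?_,
    fun S hS => by obtain ⟨r, _, hr⟩ := Finset.mem_image.1 hS; exact ⟨r, hr⟩,
    hφe, ?_, ?_⟩
  · -- card = (deg-1)/d + 1
    rw [Fintype.card_fin]
    have h1 : ((N:ℝ) - 1) * d = A.degree - 1 := by rw [hMn, ← hD]
    field_simp
    linarith [h1]
  · -- homogeneous degrees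
    intro u hu
    exact if_neg hu
  · -- IsSign
    have hdeg' : (homA e' d q ε).degree = (q-ε)^2 := homA_degree e' d q ε hpm hMn'
    have hsq : Real.sqrt ((q-ε)^2) = q - ε := Real.sqrt_sq (by linarith [hqgt])
    refine ⟨hpm0, ?_, ?_⟩
    · rw [hdeg', hsq]
      have : q - ε + ε = q := by ring
      rw [this]; exact hq0
    · intro r s t h1 h2 h3 h4 h5 h6
      have h1' : r ≠ e' := h1
      have h2' : s ≠ e' := h2
      have h3' : t ≠ e' := h3
      have hdr : (homA e' d q ε).d r = d := if_neg h1'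
      have hds : (homA e' d q ε).d s = d := if_neg h2'
      rw [hdr, hds, hdeg', hsq, show q - ε + ε = q from by ring]
      show homc e' d q ε r s t = d * d / q^2
      rw [show homc e' d q ε r s t = d^2/q^2 + 0 + 0 + 0 + 0 from by
        simp only [homc, if_neg h1', if_neg h2', if_neg h3', if_neg h4, if_neg h5, if_neg h6,
          if_neg (fun hh : r = s ∧ s = t => h4 hh.1)]]
      ring
  · -- IsPartition
    constructor
    · intro S hS
      obtain ⟨r, _, rfl⟩ := Finset.mem_image.1 hS
      exact hφne r
    · intro x
      refine ⟨φ (p x), ⟨Finset.mem_image_of_mem φ (Finset.mem_univ _),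
        (hmemφ x (p x)).2 rfl⟩, ?_⟩
      rintro S ⟨hS, hxS⟩
      obtain ⟨r, _, rfl⟩ := Finset.mem_image.1 hS
      rw [(hmemφ x r).1 hxS]
  · -- {e'} ∈ π'
    show ({e'} : Finset (Fin N)) ∈ Finset.image φ univ
    rw [← hφe]
    exact Finset.mem_image_of_mem φ (Finset.mem_univ A.e)
  · -- injective
    intro a b hab
    obtain ⟨x, hx⟩ := hφne a
    have hx2 : x ∈ φ b := hab ▸ hx
    rw [← (hmemφ x a).1 hx, ← (hmemφ x b).1 hx2]
  · -- card φ r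
    intro r hr
    rw [hcardφ]
    have := hk'val r hr
    field_simp
    linarith [this]
  · -- fusion
    intro r s t w hw
    have hpw : p w = t := (hmemφ w t).1 hw
    show A.c r s t = ∑ u ∈ φ r, ∑ v ∈ φ s, homc e' d q ε u v w
    by_cases hre : r = A.e
    · subst hre
      rw [hφe, Finset.sum_singleton, sumc_left e' d q ε (φ s) w, hA.2.2.2.1 s t]
      have hiff : s = t ↔ w ∈ φ s :=
        ⟨fun h => (hmemφ w s).2 (hpw.trans h.symm),
         fun h => ((hmemφ w s).1 h).symm.trans hpw⟩
      exact if_congr hiff rfl rfl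
    by_cases hse : s = A.e
    · subst hse
      rw [Finset.sum_congr rfl (fun u _ => by rw [hφe, Finset.sum_singleton] :
        ∀ u ∈ φ r, ∑ v ∈ φ A.e, homc e' d q ε u v w = homc e' d q ε u e' w),
        sumc_right e' d q ε (φ r) (he'φ r hre) w, hA.2.2.2.2.1 r t]
      have hiff : r = t ↔ w ∈ φ r :=
        ⟨fun h => (hmemφ w r).2 (hpw.trans h.symm),
         fun h => ((hmemφ w r).1 h).symm.trans hpw⟩
      exact if_congr hiff rfl rfl
    by_cases hte : t = A.e
    · subst hte
      have hwe : w = e' := by rw [hφe] at hw; exact Finset.mem_singleton.1 hw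
      rw [hwe]
      rw [sumc_unit e' d q ε (φ r) (φ s) (he'φ r hre) (he'φ s hse),
        hA.2.2.2.2.2.2.2.1 r s, hsym r]
      by_cases hrs : r = s
      · subst hrs
        rw [if_pos rfl, Finset.inter_self, hcardφ, hk'val r hre]
      · have hint : φ r ∩ φ s = ∅ := by
          apply Finset.eq_empty_of_forall_notMem
          intro x hx
          exact hrs ((((hmemφ x r).1 (Finset.mem_inter.1 hx).1).symm).trans
            ((hmemφ x s).1 (Finset.mem_inter.1 hx).2))
        rw [if_neg (fun h : s = r => hrs h.symm), hint]
        simp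
    -- main case
    have hwe' : w ≠ e' := fun h => hte ((h ▸ hpw).symm.trans hpe')
    rw [heval e' d q ε (φ r) (φ s) (he'φ r hre) (he'φ s hse) w hwe']
    have hwφ : ∀ a : R, (w ∈ φ a) ↔ t = a := fun a =>
      ⟨fun h => hpw.symm.trans ((hmemφ w a).1 h), fun h => (hmemφ w a).2 (hpw.trans h)⟩
    rw [if_congr (hwφ r) rfl rfl, if_congr (hwφ s) rfl rfl,
      if_congr (hwφ r) (if_congr (hwφ s) rfl rfl) rfl, hcardφ r, hcardφ s]
    have hdrk := hk'val r hre
    have hdsk := hk'val s hse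
    have hq2 : q^2 ≠ 0 := pow_ne_zero 2 hq0.ne'
    by_cases hrs : r = s
    · subst hrs
      rw [Finset.inter_self, hcardφ r]
      by_cases htr : t = r
      · subst htr
        simp only [eq_self_iff_true, if_true]
        apply mul_left_cancel₀ hq2
        rw [A_triple A q ε hA hnt ham hsym hq0.ne' hsign hD hε2 hApos t hre, ← hdrk]
        field_simp
        ring
      · simp only [if_neg htr]
        apply mul_left_cancel₀ hq2
        rw [A_diag A q ε hA hnt ham hsym hq0.ne' hsign hD hApos r t hre hte
          (fun h => htr h.symm), ← hdrk]
        field_simp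
        ring
    · have hint : φ r ∩ φ s = ∅ := by
        apply Finset.eq_empty_of_forall_notMem
        intro x hx
        exact hrs ((((hmemφ x r).1 (Finset.mem_inter.1 hx).1).symm).trans
          ((hmemφ x s).1 (Finset.mem_inter.1 hx).2))
      rw [hint, Finset.card_empty]
      by_cases htr : t = r
      · subst htr
        simp only [eq_self_iff_true, if_true, if_neg hrs]
        apply mul_left_cancel₀ hq2
        rw [show A.c t s t = A.c s t t from A_comm A hA hsym t s t,
          A_mixed A q ε hA hnt ham hsym hq0.ne' hsign hD hApos s t hse hte
            (fun h => hrs h.symm), ← hdrk, ← hdsk]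
        field_simp
        ring
      · by_cases hts : t = s
        · subst hts
          simp only [eq_self_iff_true, if_true, if_neg htr]
          apply mul_left_cancel₀ hq2
          rw [A_mixed A q ε hA hnt ham hsym hq0.ne' hsign hD hApos r t hre hte hrs,
            ← hdrk, ← hdsk]
          field_simp
          ring
        · simp only [if_neg htr, if_neg hts]
          apply mul_left_cancel₀ hq2
          rw [hsign r s t hre hse hte hrs (fun h => hts h.symm) (fun h => htr h.symm),
            ← hdrk, ← hdsk]
          field_simp
          ring
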